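/- arXiv:2111.12981 — 4 statements merged into one kernel-verified Lean document; each statement's English description precedes it below -/
import Mathlib

section
/- Let H ⊆ ℝ^d be a measurable set of candidates with finite positive Lebesgue measure, and let s : H → ℝ be a measurable score function. Let M_E be the exponential mechanism selecting h ∈ H with density proportional to exp(ε·s(h)/(2Δ)). Let H* ⊆ H be a measurable subset with positive measure and let OPT ≤ inf_{h ∈ H*} s(h). Then for every t ≥ 0, the probability that M_E outputs h with s(h) ≤ OPT − (2Δ/ε)(ln(vol(H)/vol(H*)) + t) is at most exp(−t). -/
open MeasureTheory

/-- Volume-based utility of the exponential mechanism: the output distribution has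
density proportional to `exp(ε s(h)/(2Δ))` on `H`; the probability of outputting a
candidate with score at most `OPT - (2Δ/ε)(ln(vol H / vol H*) + t)` is at most `e^{-t}`. -/
theorem exponential_mechanism_volume {d : ℕ}
    (H Hstar : Set (EuclideanSpace ℝ (Fin d)))
    (hH : MeasurableSet H) (hHstar : MeasurableSet Hstar) (hsub : Hstar ⊆ H)
    (hHpos : 0 < volume H) (hHfin : volume H < ⊤) (hHstarpos : 0 < volume Hstar)
    (s : EuclideanSpace ℝ (Fin d) → ℝ) (hs : Measurable s)
    (ε Δ OPT t : ℝ) (hε : 0 < ε) (hΔ : 0 < Δ) (ht : 0 ≤ t)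
    (hOPT : ∀ h ∈ Hstar, OPT ≤ s h)
    (hint : IntegrableOn (fun h => Real.exp (ε * s h / (2 * Δ))) H) :
    (∫ h in {h | h ∈ H ∧ s h ≤ OPT - (2 * Δ / ε) *
        (Real.log ((volume H).toReal / (volume Hstar).toReal) + t)},
      Real.exp (ε * s h / (2 * Δ))) /
      (∫ h in H, Real.exp (ε * s h / (2 * Δ))) ≤ Real.exp (-t) := by
  set a := (volume H).toReal with ha
  set b := (volume Hstar).toReal with hb
  have hafin : volume H ≠ ⊤ := hHfin.ne
  have hbfin : volume Hstar ≠ ⊤ := (lt_of_le_of_lt (measure_mono hsub) hHfin).ne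
  have hapos : 0 < a := ENNReal.toReal_pos hHpos.ne' hafin
  have hbpos : 0 < b := ENNReal.toReal_pos hHstarpos.ne' hbfin
  set L := Real.log (a / b) with hL
  set K := Real.exp (ε * OPT / (2 * Δ)) with hK
  set B := {h : EuclideanSpace ℝ (Fin d) | h ∈ H ∧ s h ≤ OPT - (2 * Δ / ε) * (L + t)}
    with hBdef
  have hBsub : B ⊆ H := fun h hh => hh.1
  have hBmeas : MeasurableSet B := by
    have : B = H ∩ {h | s h ≤ OPT - (2 * Δ / ε) * (L + t)} := rfl
    rw [this]
    exact hH.inter (measurableSet_le hs measurable_const)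
  have hBfin : volume B < ⊤ := lt_of_le_of_lt (measure_mono hBsub) hHfin
  have hexpL : Real.exp (-L) = b / a := by
    rw [hL, ← Real.log_inv, inv_div, Real.exp_log (by positivity)]
  -- pointwise bound on B
  have hptB : ∀ h ∈ B, Real.exp (ε * s h / (2 * Δ)) ≤ K * (b / a) * Real.exp (-t) := by
    intro h hh
    have hsle : s h ≤ OPT - (2 * Δ / ε) * (L + t) := hh.2
    have h1 : ε * s h / (2 * Δ) ≤ ε * OPT / (2 * Δ) - (L + t) := by
      have : ε * (OPT - (2 * Δ / ε) * (L + t)) / (2 * Δ) = ε * OPT / (2 * Δ) - (L + t) := by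
        field_simp
      rw [← this]
      gcongr
    calc Real.exp (ε * s h / (2 * Δ)) ≤ Real.exp (ε * OPT / (2 * Δ) - (L + t)) :=
          Real.exp_le_exp.2 h1
      _ = K * Real.exp (-L) * Real.exp (-t) := by
          rw [hK, ← Real.exp_add, ← Real.exp_add]; ring_nf
      _ = K * (b / a) * Real.exp (-t) := by rw [hexpL]
  -- numerator bound
  have hnum : (∫ h in B, Real.exp (ε * s h / (2 * Δ))) ≤ b * K * Real.exp (-t) := by
    have h1 : (∫ h in B, Real.exp (ε * s h / (2 * Δ)))
        ≤ ∫ _ in B, K * (b / a) * Real.exp (-t) := by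
      refine setIntegral_mono_on (hint.mono_set hBsub)
        (integrableOn_const hBfin.ne) hBmeas hptB
    have h2 : (∫ _ in B, K * (b / a) * Real.exp (-t))
        = (volume B).toReal * (K * (b / a) * Real.exp (-t)) := by
      rw [setIntegral_const, smul_eq_mul, measureReal_def]
    have h3 : (volume B).toReal ≤ a :=
      ENNReal.toReal_mono hafin (measure_mono hBsub)
    have h4 : (volume B).toReal * (K * (b / a) * Real.exp (-t))
        ≤ a * (K * (b / a) * Real.exp (-t)) := by
      apply mul_le_mul_of_nonneg_right h3
      positivity
    have h5 : a * (K * (b / a) * Real.exp (-t)) = b * K * Real.exp (-t) := by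
      field_simp
    linarith
  -- denominator bound
  have hden : b * K ≤ ∫ h in H, Real.exp (ε * s h / (2 * Δ)) := by
    have h1 : (∫ _ in Hstar, K) ≤ ∫ h in Hstar, Real.exp (ε * s h / (2 * Δ)) := by
      refine setIntegral_mono_on (integrableOn_const (lt_of_le_of_lt
        (measure_mono hsub) hHfin).ne) (hint.mono_set hsub) hHstar ?_
      intro h hh
      rw [hK]
      apply Real.exp_le_exp.2
      gcongr
      exact hOPT h hh
    have h2 : (∫ _ in Hstar, K) = b * K := by
      rw [setIntegral_const, smul_eq_mul, measureReal_def]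
    have h3 : (∫ h in Hstar, Real.exp (ε * s h / (2 * Δ)))
        ≤ ∫ h in H, Real.exp (ε * s h / (2 * Δ)) := by
      apply setIntegral_mono_set hint
      · filter_upwards with x using Real.exp_nonneg _
      · exact HasSubset.Subset.eventuallyLE hsub
    linarith
  have hKpos : 0 < K := Real.exp_pos _
  have hdenpos : 0 < ∫ h in H, Real.exp (ε * s h / (2 * Δ)) :=
    lt_of_lt_of_le (by positivity) hden
  rw [div_le_iff₀ hdenpos]
  calc (∫ h in B, Real.exp (ε * s h / (2 * Δ))) ≤ b * K * Real.exp (-t) := hnum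
    _ = Real.exp (-t) * (b * K) := by ring
    _ ≤ Real.exp (-t) * ∫ h in H, Real.exp (ε * s h / (2 * Δ)) := by
        apply mul_le_mul_of_nonneg_left hden (Real.exp_nonneg _)
end

section
/- Let Z₁,...,Z_k, μ̃, μ ∈ ℝ^d, and write Δ = (μ − μ̃)/‖μ − μ̃‖. Suppose: (i) there is a set G ⊆ {1,...,k} with |G| ≥ (1 − 1/M)k such that ⟨Z_i − μ, −y⟩ ≤ 5Mr* for all i ∈ G; (ii) ⟨y, Δ⟩ > 0 and |⟨y, Δ⟩| > 0.1; (iii) ‖μ − μ̃‖ ≥ 5M²r*; and (iv) M ≥ 1000, r* > 0. Then |{i : ⟨Z_i − μ̃, y⟩ > 0}| ≥ (1 − 1/M)k. -/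
open EuclideanSpace

notation "⟪" x ", " y "⟫" => @inner ℝ _ _ x y

/-- If a candidate direction `y` has nontrivial correlation with
`Δ = (μ - μ̃)/‖μ - μ̃‖` and most points `Z_i` satisfy `⟨Z_i - μ, -y⟩ ≤ 5Mr*`,
then most points satisfy `⟨Z_i - μ̃, y⟩ > 0`. -/
theorem good_direction {d k : ℕ}
    (Z : Fin k → EuclideanSpace ℝ (Fin d)) (μt μ y : EuclideanSpace ℝ (Fin d))
    (M rstar : ℝ) (hM : 1000 ≤ M) (hr : 0 < rstar)
    (hne : μ ≠ μt)
    (G : Finset (Fin k)) (hGcard : (1 - 1 / M) * k ≤ (G.card : ℝ))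
    (hG : ∀ i ∈ G, ⟪Z i - μ, -y⟫ ≤ 5 * M * rstar)
    (hpos : 0 < ⟪y, ‖μ - μt‖⁻¹ • (μ - μt)⟫)
    (hcorr : 0.1 < |⟪y, ‖μ - μt‖⁻¹ • (μ - μt)⟫|)
    (hfar : 5 * M ^ 2 * rstar ≤ ‖μ - μt‖) :
    (1 - 1 / M) * k ≤
      ((Finset.univ.filter fun i => 0 < ⟪Z i - μt, y⟫).card : ℝ) := by
  have hn : 0 < ‖μ - μt‖ := by
    rw [norm_pos_iff]; exact sub_ne_zero.mpr hne
  have hc : (0.1 : ℝ) < ⟪y, ‖μ - μt‖⁻¹ • (μ - μt)⟫ := by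
    rwa [abs_of_pos hpos] at hcorr
  have hinner : ⟪y, ‖μ - μt‖⁻¹ • (μ - μt)⟫ = ‖μ - μt‖⁻¹ * ⟪y, μ - μt⟫ :=
    real_inner_smul_right y _ _
  have hmu : 0.1 * ‖μ - μt‖ < ⟪y, μ - μt⟫ := by
    rw [hinner] at hc
    have := (mul_lt_mul_iff_of_pos_right hn).mpr hc
    rw [mul_comm, inv_mul_eq_div, div_mul_cancel₀ _ (ne_of_gt hn)] at this
    linarith
  have hsub : G ⊆ Finset.univ.filter fun i => 0 < ⟪Z i - μt, y⟫ := by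
    intro i hi
    simp only [Finset.mem_filter, Finset.mem_univ, true_and]
    have h1 : -⟪Z i - μ, y⟫ ≤ 5 * M * rstar := by
      have := hG i hi
      rwa [inner_neg_right] at this
    have h2 : ⟪Z i - μt, y⟫ = ⟪Z i - μ, y⟫ + ⟪y, μ - μt⟫ := by
      rw [real_inner_comm (μ - μt) y]
      simp only [inner_sub_left]
      ring
    rw [h2]
    nlinarith [hr, hM, hfar, hmu, h1]
  calc (1 - 1 / M) * k ≤ (G.card : ℝ) := hGcard
    _ ≤ _ := by exact_mod_cast Finset.card_le_card hsub
end

section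
/- Let P = {P₁,...,P_m} be probability distributions and P_O a distribution with total variation distance d_TV(P_i, P_O) ≤ γ for all i. Let G₁,...,G_m be pairwise disjoint measurable subsets of an output space. Suppose M is an ε-differentially private algorithm taking n-element datasets such that Pr_{X ∼ P_i^n}[M(X) ∈ G_i] ≥ 1 − β for all i, where β < 1. Then n ≥ Ω((log m + log(1/β)) / (γ(e^{2ε} − 1))); concretely, 1 − β ≤ exp(nγ(e^{2ε} − 1)) · √(β/(m−1)). -/
open MeasureTheory

open Set Filter
open scoped ENNReal

lemma tv_lintegral {𝓧 : Type*} [MeasurableSpace 𝓧] (μ ν : Measure 𝓧)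
    (p : ℝ≥0∞) (hTV : ∀ s, MeasurableSet s → μ s ≤ ν s + p)
    (h : 𝓧 → ℝ) (hh : Measurable h) (hh0 : ∀ x, 0 ≤ h x)
    (Mb : ℝ) (hMb : 0 ≤ Mb) (hhb : ∀ x, h x ≤ Mb) :
    ∫⁻ x, ENNReal.ofReal (h x) ∂μ ≤ ∫⁻ x, ENNReal.ofReal (h x) ∂ν + ENNReal.ofReal Mb * p := by
  rw [lintegral_eq_lintegral_meas_le μ (Eventually.of_forall hh0) hh.aemeasurable,
      lintegral_eq_lintegral_meas_le ν (Eventually.of_forall hh0) hh.aemeasurable]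
  have hsplit : (Ioi (0:ℝ)) = Ioc 0 Mb ∪ Ioi Mb := (Ioc_union_Ioi_eq_Ioi hMb).symm
  have hdisj : Disjoint (Ioc (0:ℝ) Mb) (Ioi Mb) := by
    simp [Set.disjoint_left]
  have hzero : ∀ (κ : Measure 𝓧), ∫⁻ t in Ioi Mb, κ {a | t ≤ h a} = 0 := by
    intro κ
    have : ∫⁻ t in Ioi Mb, κ {a | t ≤ h a} = ∫⁻ _t in Ioi Mb, (0:ℝ≥0∞) := by
      apply setLIntegral_congr_fun measurableSet_Ioi
      intro t ht
      have : {a | t ≤ h a} = ∅ := by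
        ext a; simp only [mem_setOf_eq, mem_empty_iff_false, iff_false, not_le]
        exact lt_of_le_of_lt (hhb a) ht
      simp [this]
    simp [this]
  have key : ∀ (κ : Measure 𝓧),
      ∫⁻ t in Ioi (0:ℝ), κ {a | t ≤ h a} = ∫⁻ t in Ioc (0:ℝ) Mb, κ {a | t ≤ h a} := by
    intro κ
    rw [hsplit, lintegral_union measurableSet_Ioi hdisj, hzero, add_zero]
  rw [key μ, key ν]
  calc ∫⁻ t in Ioc (0:ℝ) Mb, μ {a | t ≤ h a}
      ≤ ∫⁻ t in Ioc (0:ℝ) Mb, (ν {a | t ≤ h a} + p) := by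
        apply lintegral_mono
        intro t
        exact hTV _ (hh measurableSet_Ici)
    _ = (∫⁻ t in Ioc (0:ℝ) Mb, ν {a | t ≤ h a}) + ENNReal.ofReal Mb * p := by
        rw [lintegral_add_right _ measurable_const, setLIntegral_const, Real.volume_Ioc,
          sub_zero, mul_comm]

lemma step_one {𝓧 : Type*} [MeasurableSpace 𝓧] (μ ν : Measure 𝓧)
    [IsProbabilityMeasure μ] [IsProbabilityMeasure ν]
    (p C : ℝ) (hp : 0 ≤ p) (hC : 1 ≤ C)
    (hTV : ∀ s, MeasurableSet s → μ s ≤ ν s + ENNReal.ofReal p)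
    (g : 𝓧 → ℝ≥0∞) (hg : Measurable g) (hgb : ∀ x, g x ≤ 1)
    (hflip : ∀ x y, g x ≤ ENNReal.ofReal C * g y) :
    ∫⁻ x, g x ∂μ ≤ ENNReal.ofReal (1 + p * (C - 1)) * ∫⁻ x, g x ∂ν := by
  have hne : Nonempty 𝓧 := by
    by_contra hne
    rw [not_nonempty_iff] at hne
    have h1 := measure_univ (μ := μ)
    rw [show (Set.univ : Set 𝓧) = ∅ from Set.univ_eq_empty_iff.mpr hne, measure_empty] at h1
    exact zero_ne_one h1
  set a : ℝ≥0∞ := ⨅ y, g y with ha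
  have ha_le : ∀ x, a ≤ g x := fun x => iInf_le _ x
  have ha1 : a ≤ 1 := le_trans (ha_le (Classical.arbitrary 𝓧)) (hgb _)
  have ha_ne : a ≠ ∞ := (lt_of_le_of_lt ha1 (by norm_num)).ne
  have haC : ∀ x, g x ≤ ENNReal.ofReal C * a := by
    intro x
    rw [ha, ENNReal.mul_iInf (by simp [ENNReal.ofReal_ne_top])]
    exact le_iInf fun y => hflip x y
  -- the real-valued difference function
  set hr : 𝓧 → ℝ := fun x => (g x).toReal - a.toReal with hhr
  have hg_ne : ∀ x, g x ≠ ∞ := fun x => (lt_of_le_of_lt (hgb x) (by norm_num)).ne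
  have hr0 : ∀ x, 0 ≤ hr x := by
    intro x
    simp only [hhr, sub_nonneg]
    exact ENNReal.toReal_mono (hg_ne x) (ha_le x)
  have hrb : ∀ x, hr x ≤ (C - 1) * a.toReal := by
    intro x
    have h1 : (g x).toReal ≤ C * a.toReal := by
      have := ENNReal.toReal_mono (by simp [ENNReal.mul_ne_top, ENNReal.ofReal_ne_top, ha_ne]) (haC x)
      rwa [ENNReal.toReal_mul, ENNReal.toReal_ofReal (by linarith)] at this
    simp only [hhr]
    nlinarith [ENNReal.toReal_nonneg (a := a)]
  have hrmeas : Measurable hr := hg.ennreal_toReal.sub measurable_const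
  have hofr : ∀ x, ENNReal.ofReal (hr x) = g x - a := by
    intro x
    rw [hhr]
    rw [ENNReal.ofReal_sub _ ENNReal.toReal_nonneg, ENNReal.ofReal_toReal (hg_ne x),
      ENNReal.ofReal_toReal ha_ne]
  have hdecomp : ∀ (κ : Measure 𝓧) [IsProbabilityMeasure κ],
      ∫⁻ x, g x ∂κ = a + ∫⁻ x, ENNReal.ofReal (hr x) ∂κ := by
    intro κ _
    have : ∫⁻ x, (a + ENNReal.ofReal (hr x)) ∂κ = a + ∫⁻ x, ENNReal.ofReal (hr x) ∂κ := by
      rw [lintegral_add_left measurable_const, lintegral_const, measure_univ, mul_one]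
    rw [← this]
    apply lintegral_congr
    intro x
    rw [hofr x, add_tsub_cancel_of_le (ha_le x)]
  have htv := tv_lintegral μ ν (ENNReal.ofReal p) hTV hr hrmeas hr0
    ((C - 1) * a.toReal) (by nlinarith [ENNReal.toReal_nonneg (a := a)]) hrb
  have haint : a ≤ ∫⁻ x, g x ∂ν := by
    calc a = ∫⁻ _x, a ∂ν := by simp
      _ ≤ ∫⁻ x, g x ∂ν := lintegral_mono ha_le
  calc ∫⁻ x, g x ∂μ = a + ∫⁻ x, ENNReal.ofReal (hr x) ∂μ := hdecomp μ
    _ ≤ a + (∫⁻ x, ENNReal.ofReal (hr x) ∂ν + ENNReal.ofReal ((C - 1) * a.toReal) * ENNReal.ofReal p) :=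
        add_le_add (le_refl a) htv
    _ = (∫⁻ x, g x ∂ν) + ENNReal.ofReal (p * (C - 1)) * a := by
        rw [hdecomp ν]
        rw [ENNReal.ofReal_mul (by linarith), ENNReal.ofReal_toReal ha_ne]
        rw [ENNReal.ofReal_mul hp]
        ring
    _ ≤ (∫⁻ x, g x ∂ν) + ENNReal.ofReal (p * (C - 1)) * ∫⁻ x, g x ∂ν := by
        gcongr
    _ = ENNReal.ofReal (1 + p * (C - 1)) * ∫⁻ x, g x ∂ν := by
        rw [ENNReal.ofReal_add (by norm_num) (by nlinarith), ENNReal.ofReal_one, add_mul, one_mul]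

lemma prod_step {𝓧 : Type*} [MeasurableSpace 𝓧] (μ ν : Measure 𝓧)
    [IsProbabilityMeasure μ] [IsProbabilityMeasure ν]
    (p C : ℝ) (hp : 0 ≤ p) (hC : 1 ≤ C)
    (hTV : ∀ s, MeasurableSet s → μ s ≤ ν s + ENNReal.ofReal p) :
    ∀ (n : ℕ) (f : (Fin n → 𝓧) → ℝ≥0∞), Measurable f → (∀ X, f X ≤ 1) →
      (∀ (X X' : Fin n → 𝓧) (j : Fin n), (∀ i, i ≠ j → X i = X' i) →
        f X ≤ ENNReal.ofReal C * f X') →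
      ∫⁻ X, f X ∂(Measure.pi fun _ => μ) ≤
        ENNReal.ofReal (1 + p * (C - 1)) ^ n * ∫⁻ X, f X ∂(Measure.pi fun _ => ν) := by
  intro n
  induction n with
  | zero =>
    intro f hf hfb hflip
    have hconst : f = fun _ => f (fun i => i.elim0) :=
      funext fun X => congrArg f (Subsingleton.elim _ _)
    rw [hconst]
    simp [lintegral_const]
  | succ n ih =>
    intro f hf hfb hflip
    set e := MeasurableEquiv.piFinSuccAbove (fun _ : Fin (n + 1) => 𝓧) 0 with he
    set F : 𝓧 × (Fin n → 𝓧) → ℝ≥0∞ := fun z => f (e.symm z) with hFdef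
    have hF : Measurable F := hf.comp e.symm.measurable
    have hsymm : ∀ (x : 𝓧) (Y : Fin n → 𝓧), e.symm (x, Y) = Fin.cons x Y := by
      intro x Y
      simp [he, MeasurableEquiv.piFinSuccAbove, Fin.insertNth_zero, Fin.consEquiv]
    have hrw : ∀ (κ : Measure 𝓧) [IsProbabilityMeasure κ],
        ∫⁻ X, f X ∂(Measure.pi fun _ : Fin (n + 1) => κ) =
          ∫⁻ x, ∫⁻ Y, f (Fin.cons x Y) ∂(Measure.pi fun _ : Fin n => κ) ∂κ := by
      intro κ _
      have hmp := measurePreserving_piFinSuccAbove (fun _ : Fin (n + 1) => κ) 0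
      have h1 : ∫⁻ X, F (e X) ∂(Measure.pi fun _ : Fin (n + 1) => κ) =
          ∫⁻ z, F z ∂(κ.prod (Measure.pi fun _ : Fin n => κ)) := hmp.lintegral_comp hF
      have h2 : ∀ X, F (e X) = f X := by
        intro X; simp [hFdef]
      simp_rw [h2] at h1
      rw [h1, lintegral_prod _ hF.aemeasurable]
      simp_rw [hFdef, hsymm]
    rw [hrw μ, hrw ν]
    set K := ENNReal.ofReal (1 + p * (C - 1)) with hK
    set G : 𝓧 → ℝ≥0∞ := fun x => ∫⁻ Y, f (Fin.cons x Y) ∂(Measure.pi fun _ : Fin n => ν)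
      with hG
    have hGmeas : Measurable G := by
      have : Measurable fun z : 𝓧 × (Fin n → 𝓧) => f (Fin.cons z.1 z.2) := by
        have : (fun z : 𝓧 × (Fin n → 𝓧) => f (Fin.cons z.1 z.2)) = F := by
          funext z; simp [hFdef, hsymm]
        rw [this]; exact hF
      exact this.lintegral_prod_right'
    have hGb : ∀ x, G x ≤ 1 := by
      intro x
      calc G x ≤ ∫⁻ _Y, 1 ∂(Measure.pi fun _ : Fin n => ν) := lintegral_mono fun Y => hfb _
        _ = 1 := by simp
    have hGflip : ∀ x x', G x ≤ ENNReal.ofReal C * G x' := by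
      intro x x'
      calc G x ≤ ∫⁻ Y, ENNReal.ofReal C * f (Fin.cons x' Y)
            ∂(Measure.pi fun _ : Fin n => ν) := by
            apply lintegral_mono
            intro Y
            apply hflip _ _ 0
            intro i hi
            rcases Fin.eq_zero_or_eq_succ i with rfl | ⟨k, rfl⟩
            · exact absurd rfl hi
            · simp [Fin.cons_succ]
        _ = ENNReal.ofReal C * G x' :=
            lintegral_const_mul' _ _ ENNReal.ofReal_ne_top
    calc ∫⁻ x, ∫⁻ Y, f (Fin.cons x Y) ∂(Measure.pi fun _ : Fin n => μ) ∂μ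
        ≤ ∫⁻ x, K ^ n * G x ∂μ := by
          apply lintegral_mono
          intro x
          apply ih (fun Y => f (Fin.cons x Y))
          · have : (fun Y => f (Fin.cons x Y)) = fun Y => F (x, Y) := by
              funext Y; simp [hFdef, hsymm]
            rw [this]; exact hF.comp measurable_prodMk_left
          · intro Y; exact hfb _
          · intro Y Y' j hYY'
            apply hflip _ _ j.succ
            intro i hi
            rcases Fin.eq_zero_or_eq_succ i with rfl | ⟨k, rfl⟩
            · simp [Fin.cons_zero]
            · simp only [Fin.cons_succ]
              exact hYY' k (fun hkj => hi (by rw [hkj]))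
      _ = K ^ n * ∫⁻ x, G x ∂μ := lintegral_const_mul' _ _ (by simp [hK, ENNReal.ofReal_ne_top, ENNReal.pow_ne_top])
      _ ≤ K ^ n * (K * ∫⁻ x, G x ∂ν) := by
          gcongr
          exact step_one μ ν p C hp hC hTV G hGmeas hGb hGflip
      _ = K ^ (n + 1) * ∫⁻ x, G x ∂ν := by ring

/-- Packing lower bound for pure differential privacy: if an `ε`-DP mechanism `M`
identifies each of `m` distributions (all within TV distance `γ` of a common
distribution) with probability `1 - β` into disjoint output sets, then
`1 - β ≤ exp(nγ(e^{2ε} - 1)) √(β/(m-1))`. -/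
theorem packing_lower_bound
    {𝓧 Ω : Type*} [MeasurableSpace 𝓧] [MeasurableSpace Ω]
    (n m : ℕ) (hm : 2 ≤ m)
    (P : Fin m → Measure 𝓧) (PO : Measure 𝓧)
    (hP : ∀ i, IsProbabilityMeasure (P i)) (hPO : IsProbabilityMeasure PO)
    (γ : ℝ) (hγ : 0 < γ)
    (hTV : ∀ i (s : Set 𝓧), MeasurableSet s → |((P i) s).toReal - (PO s).toReal| ≤ γ)
    (G : Fin m → Set Ω) (hGmeas : ∀ i, MeasurableSet (G i))
    (hGdisj : Pairwise (Function.onFun Disjoint G))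
    (M : (Fin n → 𝓧) → Measure Ω) (hMprob : ∀ X, IsProbabilityMeasure (M X))
    (hMmeas : ∀ s : Set Ω, MeasurableSet s → Measurable fun X => M X s)
    (ε : ℝ) (hε : 0 < ε)
    (hDP : ∀ X X' : Fin n → 𝓧, (∃ j, ∀ i, i ≠ j → X i = X' i) →
      ∀ s : Set Ω, MeasurableSet s → M X s ≤ ENNReal.ofReal (Real.exp ε) * M X' s)
    (β : ℝ) (hβ0 : 0 < β) (hβ1 : β < 1)
    (hacc : ∀ i, 1 - β ≤ (∫⁻ X, M X (G i) ∂(Measure.pi fun _ : Fin n => P i)).toReal) :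
    1 - β ≤ Real.exp (n * γ * (Real.exp (2 * ε) - 1)) * Real.sqrt (β / ((m : ℝ) - 1)) := by
  classical
  have hm1R : (1 : ℝ) ≤ (m : ℝ) - 1 := by
    have : (2 : ℝ) ≤ (m : ℝ) := by exact_mod_cast hm
    linarith
  obtain ⟨i0, hi0val⟩ : ∃ i : Fin m, (i : ℕ) = 0 := ⟨⟨0, by omega⟩, rfl⟩
  set π : Fin m → Measure (Fin n → 𝓧) := fun i => Measure.pi fun _ : Fin n => P i with hπ
  set q : Fin m → (Fin n → 𝓧) → ℝ≥0∞ := fun i X => M X (G i) with hq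
  have hqmeas : ∀ i, Measurable (q i) := fun i => hMmeas (G i) (hGmeas i)
  have hqb : ∀ i X, q i X ≤ 1 := fun i X => by
    haveI := hMprob X; exact prob_le_one
  haveI : ∀ i, IsProbabilityMeasure (π i) := fun i => by
    haveI := hP i; infer_instance
  have hfin : ∀ i j, ∫⁻ X, q i X ∂(π j) ≠ ∞ := by
    intro i j
    have : ∫⁻ X, q i X ∂(π j) ≤ 1 := by
      calc ∫⁻ X, q i X ∂(π j) ≤ ∫⁻ _X, 1 ∂(π j) := lintegral_mono fun X => hqb i X
        _ = 1 := by simp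
    exact (lt_of_le_of_lt this (by norm_num)).ne
  have hacc' : ∀ i, ENNReal.ofReal (1 - β) ≤ ∫⁻ X, q i X ∂(π i) := by
    intro i
    rw [← ENNReal.ofReal_toReal (hfin i i)]
    exact ENNReal.ofReal_le_ofReal (hacc i)
  -- sum of the disjoint-set probabilities is at most 1
  have hsumint : ∑ i, ∫⁻ X, q i X ∂(π i0) ≤ 1 := by
    rw [← lintegral_finset_sum _ (fun i _ => hqmeas i)]
    calc ∫⁻ X, ∑ i, q i X ∂(π i0) ≤ ∫⁻ _X, 1 ∂(π i0) := by
          apply lintegral_mono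
          intro X
          haveI := hMprob X
          have hd : (↑(Finset.univ : Finset (Fin m)) : Set (Fin m)).PairwiseDisjoint G :=
            fun i _ j _ hij => hGdisj hij
          calc ∑ i, q i X = M X (⋃ i ∈ Finset.univ, G i) :=
                (measure_biUnion_finset hd fun i _ => hGmeas i).symm
            _ ≤ 1 := prob_le_one
      _ = 1 := by simp
  -- the sum over indices other than 0 is at most β
  have hkey : ∑ ℓ ∈ Finset.univ.erase i0, ∫⁻ X, q ℓ X ∂(π i0) ≤ ENNReal.ofReal β := by
    have h1 : (∑ ℓ ∈ Finset.univ.erase i0, ∫⁻ X, q ℓ X ∂(π i0)) + ENNReal.ofReal (1 - β) ≤ 1 := by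
      calc (∑ ℓ ∈ Finset.univ.erase i0, ∫⁻ X, q ℓ X ∂(π i0)) + ENNReal.ofReal (1 - β)
          ≤ (∑ ℓ ∈ Finset.univ.erase i0, ∫⁻ X, q ℓ X ∂(π i0)) + ∫⁻ X, q i0 X ∂(π i0) :=
            add_le_add (le_refl _) (hacc' i0)
        _ = ∑ i, ∫⁻ X, q i X ∂(π i0) := Finset.sum_erase_add _ _ (Finset.mem_univ i0)
        _ ≤ 1 := hsumint
    have h2 := ENNReal.le_sub_of_add_le_right ENNReal.ofReal_ne_top h1
    have h3 : (1 : ℝ≥0∞) - ENNReal.ofReal (1 - β) = ENNReal.ofReal β := by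
      rw [← ENNReal.ofReal_one, ← ENNReal.ofReal_sub _ (by linarith)]
      norm_num
    rwa [h3] at h2
  -- pigeonhole: some ℓ ≠ 0 has small probability under π 0
  have hpig : ∃ ℓ ∈ Finset.univ.erase (i0 : Fin m),
      ∫⁻ X, q ℓ X ∂(π i0) ≤ ENNReal.ofReal (β / ((m : ℝ) - 1)) := by
    have hne : (Finset.univ.erase (i0 : Fin m)).Nonempty := by
      refine ⟨⟨1, by omega⟩, Finset.mem_erase.mpr ⟨?_, Finset.mem_univ _⟩⟩
      simp [Fin.ext_iff, hi0val]
    have hcard : (Finset.univ.erase (i0 : Fin m)).card = m - 1 := by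
      rw [Finset.card_erase_of_mem (Finset.mem_univ _)]
      simp
    have hsumR : ∑ ℓ ∈ Finset.univ.erase i0, (∫⁻ X, q ℓ X ∂(π i0)).toReal ≤ β := by
      have h1 : (∑ ℓ ∈ Finset.univ.erase i0, ∫⁻ X, q ℓ X ∂(π i0)).toReal ≤
          (ENNReal.ofReal β).toReal :=
        ENNReal.toReal_mono ENNReal.ofReal_ne_top hkey
      rw [ENNReal.toReal_sum (fun ℓ _ => hfin ℓ i0), ENNReal.toReal_ofReal hβ0.le] at h1
      exact h1
    have hconst : ∑ _ℓ ∈ Finset.univ.erase (i0 : Fin m), β / ((m : ℝ) - 1) = β := by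
      rw [Finset.sum_const, hcard, nsmul_eq_mul]
      have : ((m - 1 : ℕ) : ℝ) = (m : ℝ) - 1 := by
        rw [Nat.cast_sub (by omega)]; norm_num
      rw [this]
      field_simp
    have Hle : ∑ ℓ ∈ Finset.univ.erase i0, (∫⁻ X, q ℓ X ∂(π i0)).toReal ≤
        ∑ _ℓ ∈ Finset.univ.erase (i0 : Fin m), β / ((m : ℝ) - 1) := by
      rw [hconst]; exact hsumR
    obtain ⟨ℓ, hℓ, hle⟩ := Finset.exists_le_of_sum_le hne Hle
    refine ⟨ℓ, hℓ, ?_⟩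
    rw [← ENNReal.ofReal_toReal (hfin ℓ i0)]
    exact ENNReal.ofReal_le_ofReal hle
  obtain ⟨ℓ, hℓmem, hℓsmall⟩ := hpig
  haveI := hP ℓ
  haveI := hP i0
  -- pairwise TV bound
  have hTV2 : ∀ s, MeasurableSet s → P ℓ s ≤ P i0 s + ENNReal.ofReal (2 * γ) := by
    intro s hs
    have h1 := abs_le.mp (hTV ℓ s hs)
    have h2 := abs_le.mp (hTV i0 s hs)
    calc P ℓ s = ENNReal.ofReal (P ℓ s).toReal := (ENNReal.ofReal_toReal (measure_ne_top _ _)).symm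
      _ ≤ ENNReal.ofReal ((P i0 s).toReal + 2 * γ) := ENNReal.ofReal_le_ofReal (by linarith [h1.1, h1.2, h2.1, h2.2])
      _ = ENNReal.ofReal (P i0 s).toReal + ENNReal.ofReal (2 * γ) :=
          ENNReal.ofReal_add ENNReal.toReal_nonneg (by linarith)
      _ = P i0 s + ENNReal.ofReal (2 * γ) := by rw [ENNReal.ofReal_toReal (measure_ne_top _ _)]
  set C : ℝ := Real.exp (2 * ε) with hCdef
  have hC1 : 1 ≤ C := Real.one_le_exp (by linarith)
  -- the squared function
  set f : (Fin n → 𝓧) → ℝ≥0∞ := fun X => q ℓ X ^ 2 with hfdef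
  have hfmeas : Measurable f := (hqmeas ℓ).pow_const 2
  have hfb : ∀ X, f X ≤ 1 := fun X => pow_le_one' (hqb ℓ X) 2
  have hexp2 : Real.exp ε ^ 2 = C := by
    rw [hCdef, sq, ← Real.exp_add]; ring_nf
  have hfflip : ∀ (X X' : Fin n → 𝓧) (j : Fin n), (∀ i, i ≠ j → X i = X' i) →
      f X ≤ ENNReal.ofReal C * f X' := by
    intro X X' j hij
    have h := hDP X X' ⟨j, hij⟩ (G ℓ) (hGmeas ℓ)
    calc f X = q ℓ X ^ 2 := rfl
      _ ≤ (ENNReal.ofReal (Real.exp ε) * q ℓ X') ^ 2 := pow_le_pow_left' h 2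
      _ = ENNReal.ofReal (Real.exp ε) ^ 2 * q ℓ X' ^ 2 := mul_pow _ _ 2
      _ = ENNReal.ofReal C * f X' := by
          rw [← ENNReal.ofReal_pow (Real.exp_nonneg _), hexp2]
  -- apply the product lemma
  have hprod := prod_step (P ℓ) (P i0) (2 * γ) C (by linarith) hC1 hTV2 n f hfmeas hfb hfflip
  -- f ≤ q ℓ pointwise, so the π 0 integral of f is small
  have hf0 : ∫⁻ X, f X ∂(π i0) ≤ ENNReal.ofReal (β / ((m : ℝ) - 1)) := by
    refine le_trans ?_ hℓsmall
    apply lintegral_mono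
    intro X
    calc f X = q ℓ X * q ℓ X := sq (q ℓ X)
      _ ≤ 1 * q ℓ X := mul_le_mul_left (hqb ℓ X) _
      _ = q ℓ X := one_mul _
  -- Cauchy-Schwarz
  have hCS : ∫⁻ X, q ℓ X ∂(π ℓ) ≤ (∫⁻ X, f X ∂(π ℓ)) ^ (1 / 2 : ℝ) := by
    have hh := ENNReal.lintegral_mul_norm_pow_le (μ := π ℓ) hfmeas.aemeasurable
      (aemeasurable_const (b := (1 : ℝ≥0∞))) (p := 1/2) (q := 1/2)
      (by norm_num) (by norm_num) (by norm_num)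
    have h1 : ∀ X, f X ^ (1/2 : ℝ) * (1 : ℝ≥0∞) ^ (1/2 : ℝ) = q ℓ X := by
      intro X
      simp only [ENNReal.one_rpow, mul_one, hfdef]
      rw [← ENNReal.rpow_natCast (q ℓ X) 2, ← ENNReal.rpow_mul]
      norm_num
    simp_rw [h1] at hh
    simpa using hh
  -- numeric bound on the product constant
  have hKbound : ENNReal.ofReal (1 + 2 * γ * (C - 1)) ^ n ≤
      ENNReal.ofReal (Real.exp (2 * (n : ℝ) * γ * (C - 1))) := by
    rw [← ENNReal.ofReal_pow (by nlinarith)]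
    apply ENNReal.ofReal_le_ofReal
    calc (1 + 2 * γ * (C - 1)) ^ n ≤ Real.exp (2 * γ * (C - 1)) ^ n := by
          apply pow_le_pow_left₀ (by nlinarith)
          linarith [Real.add_one_le_exp (2 * γ * (C - 1))]
      _ = Real.exp ((n : ℝ) * (2 * γ * (C - 1))) := by
          rw [← Real.exp_nat_mul]
      _ = Real.exp (2 * (n : ℝ) * γ * (C - 1)) := by ring_nf
  -- combine everything in ℝ≥0∞
  set R : ℝ := Real.exp (2 * (n : ℝ) * γ * (C - 1)) * (β / ((m : ℝ) - 1)) with hRdef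
  have hR0 : 0 ≤ R := by positivity
  have hchain : ENNReal.ofReal (1 - β) ≤ ENNReal.ofReal (R ^ (1/2 : ℝ)) := by
    calc ENNReal.ofReal (1 - β) ≤ ∫⁻ X, q ℓ X ∂(π ℓ) := hacc' ℓ
      _ ≤ (∫⁻ X, f X ∂(π ℓ)) ^ (1 / 2 : ℝ) := hCS
      _ ≤ (ENNReal.ofReal R) ^ (1 / 2 : ℝ) := by
          apply ENNReal.rpow_le_rpow _ (by norm_num)
          calc ∫⁻ X, f X ∂(π ℓ)
              ≤ ENNReal.ofReal (1 + 2 * γ * (C - 1)) ^ n * ∫⁻ X, f X ∂(π i0) := hprod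
            _ ≤ ENNReal.ofReal (Real.exp (2 * (n : ℝ) * γ * (C - 1))) *
                ENNReal.ofReal (β / ((m : ℝ) - 1)) := mul_le_mul' hKbound hf0
            _ = ENNReal.ofReal R := by
                rw [← ENNReal.ofReal_mul (Real.exp_nonneg _)]
      _ = ENNReal.ofReal (R ^ (1/2 : ℝ)) := by
          rw [← ENNReal.ofReal_rpow_of_nonneg hR0 (by norm_num)]
  have hreal : 1 - β ≤ R ^ (1/2 : ℝ) :=
    (ENNReal.ofReal_le_ofReal_iff (Real.rpow_nonneg hR0 _)).mp hchain
  -- convert the rpow to the target form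
  have hsqrt : R ^ (1/2 : ℝ) = Real.exp ((n : ℝ) * γ * (C - 1)) * Real.sqrt (β / ((m : ℝ) - 1)) := by
    rw [← Real.sqrt_eq_rpow, hRdef, Real.sqrt_mul (Real.exp_nonneg _)]
    congr 1
    rw [show (2 : ℝ) * (n : ℝ) * γ * (C - 1) = 2 * ((n : ℝ) * γ * (C - 1)) by ring,
      show Real.exp (2 * ((n : ℝ) * γ * (C - 1))) = Real.exp ((n : ℝ) * γ * (C - 1)) ^ 2 by
        rw [sq, ← Real.exp_add]; ring_nf]
    exact Real.sqrt_sq (Real.exp_nonneg _)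
  rw [hsqrt] at hreal
  exact hreal
end

section
/- Fix Z₁,...,Z_k, μ̃ ∈ ℝ^d. For r ≥ 0, let SDP(μ̃, r, Z) denote the optimal value of the semidefinite program maximizing Tr(B) over symmetric PSD block matrices [[1, bᵀ, vᵀ],[b, B, W],[v, Wᵀ, V]] subject to B_{ii} = b_i for all i, Tr(V) = 1, and B_{ii}·r ≤ ⟨Z_i − μ̃, W_i⟩ for all i. Then SDP(μ̃, r, Z) is a nonincreasing function of r, and changing a single Z_i changes SDP(μ̃, r, Z) by at most 1 (sensitivity 1). -/
open Matrix

/-- Feasible set of the SDP relaxation: symmetric PSD block matrices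
`[[1, bᵀ, vᵀ],[b, B, W],[v, Wᵀ, V]]` with `B_{ii} = b_i`, `Tr V = 1`, and
`B_{ii} r ≤ ⟨Z_i - μ̃, W_i⟩`. -/
def sdpFeasible {k d : ℕ} (Z : Fin k → Fin d → ℝ) (μt : Fin d → ℝ) (r : ℝ)
    (Q : Matrix (Unit ⊕ Fin k ⊕ Fin d) (Unit ⊕ Fin k ⊕ Fin d) ℝ) : Prop :=
  Q.PosSemidef ∧
  Q (Sum.inl ()) (Sum.inl ()) = 1 ∧
  (∀ i : Fin k, Q (Sum.inr (Sum.inl i)) (Sum.inr (Sum.inl i)) =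
      Q (Sum.inl ()) (Sum.inr (Sum.inl i))) ∧
  (∑ j : Fin d, Q (Sum.inr (Sum.inr j)) (Sum.inr (Sum.inr j))) = 1 ∧
  (∀ i : Fin k, Q (Sum.inr (Sum.inl i)) (Sum.inr (Sum.inl i)) * r ≤
      ∑ j : Fin d, (Z i j - μt j) * Q (Sum.inr (Sum.inl i)) (Sum.inr (Sum.inr j)))

/-- The optimal value `SDP(μ̃, r, Z)` of the semidefinite program: the supremum
of `Tr B` over feasible solutions. -/
noncomputable def sdpVal {k d : ℕ} (Z : Fin k → Fin d → ℝ) (μt : Fin d → ℝ)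
    (r : ℝ) : ℝ :=
  sSup ((fun Q : Matrix (Unit ⊕ Fin k ⊕ Fin d) (Unit ⊕ Fin k ⊕ Fin d) ℝ =>
    ∑ i : Fin k, Q (Sum.inr (Sum.inl i)) (Sum.inr (Sum.inl i))) ''
      {Q | sdpFeasible Z μt r Q})

/-- Quadratic-form inequality for two indices of a PSD matrix. -/
lemma psd_two_entry {n : Type*} [Fintype n] [DecidableEq n] {Q : Matrix n n ℝ}
    (hQ : Q.PosSemidef) (a b : n) (t s : ℝ) :
    0 ≤ t * t * Q a a + t * s * Q a b + s * t * Q b a + s * s * Q b b := by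
  have h := hQ.dotProduct_mulVec_nonneg (Pi.single a t + Pi.single b s)
  simp only [star_trivial, dotProduct, mulVec, Pi.add_apply, Pi.single_apply,
    mul_add, add_mul, mul_ite, ite_mul, zero_mul, mul_zero, zero_add, add_zero,
    Finset.sum_add_distrib, Finset.sum_ite_eq', Finset.mem_univ, if_true] at h
  linear_combination h

/-- Diagonal entries of a feasible solution lie in `[0, 1]`. -/
lemma diag_mem_Icc {k d : ℕ} {Z : Fin k → Fin d → ℝ} {μt : Fin d → ℝ} {r : ℝ}
    {Q : Matrix (Unit ⊕ Fin k ⊕ Fin d) (Unit ⊕ Fin k ⊕ Fin d) ℝ}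
    (hQ : sdpFeasible Z μt r Q) (i : Fin k) :
    0 ≤ Q (Sum.inr (Sum.inl i)) (Sum.inr (Sum.inl i)) ∧
      Q (Sum.inr (Sum.inl i)) (Sum.inr (Sum.inl i)) ≤ 1 := by
  set a : Unit ⊕ Fin k ⊕ Fin d := Sum.inl ()
  set b : Unit ⊕ Fin k ⊕ Fin d := Sum.inr (Sum.inl i)
  have hnn : 0 ≤ Q b b := by simpa using psd_two_entry hQ.1 a b 0 1
  have hsym : Q b a = Q a b := by
    have := hQ.1.1
    calc Q b a = Qᴴ a b := by simp [conjTranspose_apply]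
    _ = Q a b := by rw [this]
  have hb : Q b b = Q a b := hQ.2.2.1 i
  have h2 := psd_two_entry hQ.1 a b (Q b b) (-1)
  rw [hQ.2.1] at h2
  refine ⟨hnn, ?_⟩
  nlinarith [h2, hnn]

lemma sdp_bddAbove {k d : ℕ} (Z : Fin k → Fin d → ℝ) (μt : Fin d → ℝ) (r : ℝ) :
    BddAbove ((fun Q : Matrix (Unit ⊕ Fin k ⊕ Fin d) (Unit ⊕ Fin k ⊕ Fin d) ℝ =>
      ∑ i : Fin k, Q (Sum.inr (Sum.inl i)) (Sum.inr (Sum.inl i))) ''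
        {Q | sdpFeasible Z μt r Q}) := by
  refine ⟨(k : ℝ), ?_⟩
  rintro x ⟨Q, hQ, rfl⟩
  calc (∑ i : Fin k, Q (Sum.inr (Sum.inl i)) (Sum.inr (Sum.inl i)))
      ≤ ∑ _i : Fin k, (1 : ℝ) :=
        Finset.sum_le_sum fun i _ => (diag_mem_Icc hQ i).2
    _ = (k : ℝ) := by simp

lemma sdpVal_nonneg {k d : ℕ} (Z : Fin k → Fin d → ℝ) (μt : Fin d → ℝ) (r : ℝ) :
    0 ≤ sdpVal Z μt r := by
  rcases Set.eq_empty_or_nonempty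
      ((fun Q : Matrix (Unit ⊕ Fin k ⊕ Fin d) (Unit ⊕ Fin k ⊕ Fin d) ℝ =>
        ∑ i : Fin k, Q (Sum.inr (Sum.inl i)) (Sum.inr (Sum.inl i))) ''
          {Q | sdpFeasible Z μt r Q}) with h | h
  · simp [sdpVal, h]
  · obtain ⟨x, hx⟩ := h
    obtain ⟨Q, hQ, rfl⟩ := hx
    refine le_trans ?_ (le_csSup (sdp_bddAbove Z μt r) ⟨Q, hQ, rfl⟩)
    exact Finset.sum_nonneg fun i _ => (diag_mem_Icc hQ i).1

/-- Zeroing out the row/column of index `i₀` gives a feasible solution for the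
modified data, with objective decreased by exactly `B_{i₀ i₀}`. -/
lemma zeroed_feasible {k d : ℕ} {Z Z' : Fin k → Fin d → ℝ} {μt : Fin d → ℝ}
    {r : ℝ} {Q : Matrix (Unit ⊕ Fin k ⊕ Fin d) (Unit ⊕ Fin k ⊕ Fin d) ℝ}
    (hQ : sdpFeasible Z μt r Q) {i₀ : Fin k} (hZZ : ∀ i, i ≠ i₀ → Z i = Z' i) :
    ∃ Q', sdpFeasible Z' μt r Q' ∧
      (∑ i : Fin k, Q' (Sum.inr (Sum.inl i)) (Sum.inr (Sum.inl i))) =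
        (∑ i : Fin k, Q (Sum.inr (Sum.inl i)) (Sum.inr (Sum.inl i))) -
          Q (Sum.inr (Sum.inl i₀)) (Sum.inr (Sum.inl i₀)) := by
  set a : Unit ⊕ Fin k ⊕ Fin d := Sum.inr (Sum.inl i₀) with ha
  set dv : (Unit ⊕ Fin k ⊕ Fin d) → ℝ := fun j => if j = a then 0 else 1 with hdv
  set D := Matrix.diagonal dv with hD
  refine ⟨D * Q * D, ?_, ?_⟩
  · have hent : ∀ j l, (D * Q * D) j l = dv j * Q j l * dv l := by
      intro j l
      rw [hD, Matrix.mul_diagonal, Matrix.diagonal_mul]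
    have hpsd : (D * Q * D).PosSemidef := by
      have : Dᴴ = D := by
        simp [hD, Matrix.diagonal_conjTranspose]
      have h := hQ.1.mul_mul_conjTranspose_same D
      rwa [this] at h
    refine ⟨hpsd, ?_, ?_, ?_, ?_⟩
    · rw [hent]
      simp [hdv, ha, hQ.2.1]
    · intro i
      by_cases hi : i = i₀
      · subst hi
        rw [hent, hent]
        simp [hdv, ha]
      · rw [hent, hent]
        have hne : (Sum.inr (Sum.inl i) : Unit ⊕ Fin k ⊕ Fin d) ≠ a := by
          simp [ha, hi]
        simp [hdv, hne, ha, hQ.2.2.1 i, hi]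
    · have : ∀ j : Fin d, (D * Q * D) (Sum.inr (Sum.inr j)) (Sum.inr (Sum.inr j)) =
          Q (Sum.inr (Sum.inr j)) (Sum.inr (Sum.inr j)) := by
        intro j
        rw [hent]
        simp [hdv, ha]
      simp only [this]
      exact hQ.2.2.2.1
    · intro i
      by_cases hi : i = i₀
      · subst hi
        have h1 : (D * Q * D) a a = 0 := by rw [hent]; simp [hdv]
        rw [← ha, h1]
        have : ∀ j : Fin d, (D * Q * D) a (Sum.inr (Sum.inr j)) = 0 := by
          intro j
          rw [hent]; simp [hdv]
        simp [this]
      · have hne : (Sum.inr (Sum.inl i) : Unit ⊕ Fin k ⊕ Fin d) ≠ a := by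
          simp [ha, hi]
        have h1 : ∀ l, (D * Q * D) (Sum.inr (Sum.inl i)) l = Q (Sum.inr (Sum.inl i)) l * dv l := by
          intro l; rw [hent]; simp [hdv, hne]
        simp only [h1]
        have h2 : ∀ j : Fin d, dv (Sum.inr (Sum.inr j)) = 1 := by
          intro j; simp [hdv, ha]
        have h3 : dv (Sum.inr (Sum.inl i)) = 1 := by simp [hdv, hne]
        simp only [h2, h3, mul_one]
        rw [← hZZ i hi]
        exact hQ.2.2.2.2 i
  · have hent : ∀ j l, (D * Q * D) j l = dv j * Q j l * dv l := by
      intro j l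
      rw [hD, Matrix.mul_diagonal, Matrix.diagonal_mul]
    have : ∀ i : Fin k, (D * Q * D) (Sum.inr (Sum.inl i)) (Sum.inr (Sum.inl i)) =
        Q (Sum.inr (Sum.inl i)) (Sum.inr (Sum.inl i)) -
          (if i = i₀ then Q a a else 0) := by
      intro i
      by_cases hi : i = i₀
      · subst hi
        rw [hent]; simp [hdv, ha]
      · have hne : (Sum.inr (Sum.inl i) : Unit ⊕ Fin k ⊕ Fin d) ≠ a := by
          simp [ha, hi]
        rw [hent]; simp [hdv, hne, hi]
    simp only [this, Finset.sum_sub_distrib, Finset.sum_ite_eq', Finset.mem_univ,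
      if_true, ha]

lemma sdpVal_sens_le {k d : ℕ} (Z Z' : Fin k → Fin d → ℝ) (μt : Fin d → ℝ)
    (r : ℝ) {i₀ : Fin k} (hZZ : ∀ i, i ≠ i₀ → Z i = Z' i) :
    sdpVal Z μt r ≤ sdpVal Z' μt r + 1 := by
  apply Real.sSup_le
  · rintro x ⟨Q, hQ, rfl⟩
    obtain ⟨Q', hQ', hsum⟩ := zeroed_feasible hQ hZZ
    have hle : (∑ i : Fin k, Q' (Sum.inr (Sum.inl i)) (Sum.inr (Sum.inl i))) ≤
        sdpVal Z' μt r := le_csSup (sdp_bddAbove Z' μt r) ⟨Q', hQ', rfl⟩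
    have hd := (diag_mem_Icc hQ i₀).2
    linarith [hsum ▸ hle]
  · linarith [sdpVal_nonneg Z' μt r]

/-- The SDP value is nonincreasing in the radius `r`, and has sensitivity `1`
with respect to replacing a single data point `Z_i`. -/
theorem sdpVal_monotone_and_sensitivity {k d : ℕ}
    (Z Z' : Fin k → Fin d → ℝ) (μt : Fin d → ℝ) :
    (∀ r r' : ℝ, 0 ≤ r' → r' ≤ r → sdpVal Z μt r ≤ sdpVal Z μt r') ∧
    (∀ r : ℝ, 0 ≤ r → (∃ i₀, ∀ i, i ≠ i₀ → Z i = Z' i) →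
      |sdpVal Z μt r - sdpVal Z' μt r| ≤ 1) := by
  constructor
  · intro r r' _ hrr
    apply Real.sSup_le
    · rintro x ⟨Q, hQ, rfl⟩
      refine le_csSup (sdp_bddAbove Z μt r') ⟨Q, ?_, rfl⟩
      obtain ⟨hpsd, h1, hb, hV, hc⟩ := hQ
      refine ⟨hpsd, h1, hb, hV, fun i => ?_⟩
      have h0 := (diag_mem_Icc ⟨hpsd, h1, hb, hV, hc⟩ i).1
      calc Q (Sum.inr (Sum.inl i)) (Sum.inr (Sum.inl i)) * r' ≤
          Q (Sum.inr (Sum.inl i)) (Sum.inr (Sum.inl i)) * r :=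
            mul_le_mul_of_nonneg_left hrr h0
        _ ≤ _ := hc i
    · exact sdpVal_nonneg Z μt r'
  · rintro r _ ⟨i₀, hZZ⟩
    have h1 := sdpVal_sens_le Z Z' μt r hZZ
    have h2 := sdpVal_sens_le Z' Z μt r (fun i hi => (hZZ i hi).symm)
    rw [abs_le]
    constructor <;> linarith
end
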